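/- Let k be a field of characteristic zero and let d be the derivation of k[x,y] with d(x) = y^{m1}, d(y) = 1 + y^{m2} x, where m2 ∤ m1. Then d(k[x,y]) contains no nonzero element of k; in particular, d is non-invertible (its image contains no units of k[x,y]). -/

import Mathlib

set_option linter.unusedSectionVars false

open MvPolynomial

namespace Stmt17

open scoped Classical

variable {k : Type*} [Field k] [CharZero k]

/-- The step `K = m1 + m2 + 1`. -/
def Kz (m1 m2 : ℕ) : ℤ := (m1 : ℤ) + m2 + 1

/-- The constraint column `col t = m1 - t * m2`. -/
def colz (m1 m2 : ℕ) (t : ℕ) : ℤ := (m1 : ℤ) - t * m2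

lemma Kz_pos (m1 m2 : ℕ) : 0 < Kz m1 m2 := by
  unfold Kz; positivity

/-- Pairs of consecutive rows of the array `w`. -/
noncomputable def rows (m1 m2 : ℕ) (σ τ : ℤ → k) : ℕ → ((ℤ → k) × (ℤ → k))
  | 0 => (σ, fun n => if (n + ((0:ℕ):ℤ) * m2 + 1 : ℤ) = 0 then τ n
      else - σ n - (((0:ℕ) : k) / ((n + ((0:ℕ):ℤ) * m2 + 1 : ℤ) : k)) * σ (n + Kz m1 m2))
  | (i+1) => ((rows m1 m2 σ τ i).2,
      fun n => if (n + ((i+1:ℕ):ℤ) * m2 + 1 : ℤ) = 0 then τ n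
      else - (rows m1 m2 σ τ i).2 n
        - (((i+1:ℕ) : k) / ((n + ((i+1:ℕ):ℤ) * m2 + 1 : ℤ) : k)) * (rows m1 m2 σ τ i).1 (n + Kz m1 m2))

/-- The doubly-indexed array `w`. -/
noncomputable def wf (m1 m2 : ℕ) (σ τ : ℤ → k) (n : ℤ) (i : ℕ) : k := (rows m1 m2 σ τ i).1 n

lemma wf_zero (m1 m2 : ℕ) (σ τ : ℤ → k) (n : ℤ) : wf m1 m2 σ τ n 0 = σ n := rfl

lemma wf_succ (m1 m2 : ℕ) (σ τ : ℤ → k) (i : ℕ) (n : ℤ) :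
    wf m1 m2 σ τ n (i+1) = if (n + (i:ℤ) * m2 + 1 : ℤ) = 0 then τ n
      else - wf m1 m2 σ τ n i
        - ((i : k) / ((n + (i:ℤ) * m2 + 1 : ℤ) : k)) * wf m1 m2 σ τ (n + Kz m1 m2) (i-1) := by
  cases i with
  | zero => rfl
  | succ j => rfl


lemma wf_congr (m1 m2 : ℕ) {σ τ σ' τ' : ℤ → k} : ∀ (i : ℕ) (n : ℤ),
    (∀ b : ℕ, σ (n + (b:ℤ) * Kz m1 m2) = σ' (n + (b:ℤ) * Kz m1 m2) ∧
              τ (n + (b:ℤ) * Kz m1 m2) = τ' (n + (b:ℤ) * Kz m1 m2)) →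
    wf m1 m2 σ τ n i = wf m1 m2 σ' τ' n i := by
  intro i
  induction i using Nat.strong_induction_on with
  | _ i ih =>
    intro n H
    cases i with
    | zero =>
      have h := (H 0).1
      simpa [wf_zero] using h
    | succ j =>
      have H' : ∀ b : ℕ, σ ((n + Kz m1 m2) + (b:ℤ) * Kz m1 m2) = σ' ((n + Kz m1 m2) + (b:ℤ) * Kz m1 m2) ∧
          τ ((n + Kz m1 m2) + (b:ℤ) * Kz m1 m2) = τ' ((n + Kz m1 m2) + (b:ℤ) * Kz m1 m2) := by
        intro b
        have e : (n + Kz m1 m2) + (b:ℤ) * Kz m1 m2 = n + ((b+1:ℕ):ℤ) * Kz m1 m2 := by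
          push_cast; ring
        rw [e]; exact H (b+1)
      have h0 := H 0
      simp only [Nat.cast_zero, zero_mul, add_zero] at h0
      rw [wf_succ, wf_succ]
      by_cases hs : (n + (j:ℤ) * m2 + 1 : ℤ) = 0
      · rw [if_pos hs, if_pos hs, h0.2]
      · rw [if_neg hs, if_neg hs, ih j (Nat.lt_succ_self j) n H,
          ih (j-1) (Nat.lt_succ_of_le (Nat.sub_le j 1)) (n + Kz m1 m2) H']

lemma col_ne_shift (m1 m2 : ℕ) (c : ℤ) (b : ℕ) : c + Kz m1 m2 + (b:ℤ) * Kz m1 m2 ≠ c := by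
  have h1 : (0:ℤ) < Kz m1 m2 := Kz_pos m1 m2
  have h2 : (0:ℤ) ≤ (b:ℤ) * Kz m1 m2 := by positivity
  intro h; omega

lemma wf_updateA (m1 m2 : ℕ) (σ τ : ℤ → k) (c : ℤ) (θ : k)
    (hc : ∀ i : ℕ, (c + (i:ℤ) * m2 + 1 : ℤ) ≠ 0) :
    ∀ i : ℕ, wf m1 m2 (Function.update σ c θ) τ c i
      = wf m1 m2 σ τ c i + (-1)^i * (θ - σ c) := by
  intro i
  induction i using Nat.strong_induction_on with
  | _ i ih =>
    cases i with
    | zero =>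
      simp [wf_zero]
    | succ j =>
      have hother : wf m1 m2 (Function.update σ c θ) τ (c + Kz m1 m2) (j-1)
          = wf m1 m2 σ τ (c + Kz m1 m2) (j-1) := by
        apply wf_congr
        intro b
        exact ⟨Function.update_of_ne (col_ne_shift m1 m2 c b) θ σ, rfl⟩
      rw [wf_succ, wf_succ, if_neg (hc j), if_neg (hc j), hother,
        ih j (Nat.lt_succ_self j)]
      ring

lemma wf_updateB_low (m1 m2 : ℕ) (hm2 : 0 < m2) (σ τ : ℤ → k) (c : ℤ) (θ : k) (is : ℕ)
    (hs : (c + (is:ℤ) * m2 + 1 : ℤ) = 0) :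
    ∀ i : ℕ, i ≤ is → wf m1 m2 σ (Function.update τ c θ) c i = wf m1 m2 σ τ c i := by
  intro i
  induction i using Nat.strong_induction_on with
  | _ i ih =>
    intro hle
    cases i with
    | zero => rfl
    | succ j =>
      have hns : (c + (j:ℤ) * m2 + 1 : ℤ) ≠ 0 := by
        intro h
        have : ((is:ℤ) - j) * m2 = 0 := by linear_combination hs - h
        rcases mul_eq_zero.mp this with h' | h'
        · have : (is:ℤ) = j := by omega
          have : is = j := by exact_mod_cast this
          omega
        · have : m2 = 0 := by exact_mod_cast h'
          omega
      have hother : wf m1 m2 σ (Function.update τ c θ) (c + Kz m1 m2) (j-1)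
          = wf m1 m2 σ τ (c + Kz m1 m2) (j-1) := by
        apply wf_congr
        intro b
        exact ⟨rfl, Function.update_of_ne (col_ne_shift m1 m2 c b) θ τ⟩
      rw [wf_succ, wf_succ, if_neg hns, if_neg hns, hother,
        ih j (Nat.lt_succ_self j) (by omega)]

lemma wf_updateB_high (m1 m2 : ℕ) (hm2 : 0 < m2) (σ τ : ℤ → k) (c : ℤ) (θ : k) (is : ℕ)
    (hs : (c + (is:ℤ) * m2 + 1 : ℤ) = 0) :
    ∀ j : ℕ, wf m1 m2 σ (Function.update τ c θ) c (is+1+j)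
      = wf m1 m2 σ τ c (is+1+j) + (-1)^j * (θ - τ c) := by
  intro j
  induction j with
  | zero =>
    rw [show is + 1 + 0 = is + 1 from rfl, wf_succ, wf_succ, if_pos hs, if_pos hs,
      Function.update_self]
    ring
  | succ j ihj =>
    have hns : (c + ((is+1+j:ℕ):ℤ) * m2 + 1 : ℤ) ≠ 0 := by
      intro h
      have h2 : (((is+1+j:ℕ):ℤ) - is) * m2 = 0 := by linear_combination h - hs
      rcases mul_eq_zero.mp h2 with h' | h'
      · have : ((is+1+j:ℕ):ℤ) = is := by omega
        have : is+1+j = is := by exact_mod_cast this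
        omega
      · have : m2 = 0 := by exact_mod_cast h'
        omega
    have hother : wf m1 m2 σ (Function.update τ c θ) (c + Kz m1 m2) (is+1+j-1)
        = wf m1 m2 σ τ (c + Kz m1 m2) (is+1+j-1) := by
      apply wf_congr
      intro b
      exact ⟨rfl, Function.update_of_ne (col_ne_shift m1 m2 c b) θ τ⟩
    rw [show is + 1 + (j+1) = (is+1+j) + 1 from rfl, wf_succ, wf_succ,
      if_neg hns, if_neg hns, hother, ihj]
    ring


/-- The row just above the (unique) singular row of a column, `0` if none. -/
noncomputable def knobRow (m2 : ℕ) (c : ℤ) : ℕ :=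
  if h : ∃ i : ℕ, (c + (i:ℤ) * m2 + 1 : ℤ) = 0 then Nat.find h + 1 else 0

lemma knobRow_zero {m2 : ℕ} {c : ℤ} (h : knobRow m2 c = 0) :
    ∀ i : ℕ, (c + (i:ℤ) * m2 + 1 : ℤ) ≠ 0 := by
  intro i hi
  unfold knobRow at h
  rw [dif_pos ⟨i, hi⟩] at h
  omega

lemma colz_inj (m1 m2 : ℕ) (hm2 : 0 < m2) {a b : ℕ} (h : colz m1 m2 a = colz m1 m2 b) :
    a = b := by
  unfold colz at h
  have h1 : (a:ℤ) * m2 = (b:ℤ) * m2 := by linarith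
  have h2 : (a:ℤ) = b := by
    have hm : ((m2:ℤ)) ≠ 0 := by exact_mod_cast hm2.ne'
    exact mul_right_cancel₀ hm h1
  exact_mod_cast h2

lemma colz_ne_zero (m1 m2 : ℕ) (hnd : ¬ m2 ∣ m1) (t : ℕ) : colz m1 m2 t ≠ 0 := by
  intro h
  unfold colz at h
  have : (m1:ℤ) = t * m2 := by linarith
  have hn : m1 = t * m2 := by exact_mod_cast this
  exact hnd ⟨t, by rw [hn, Nat.mul_comm]⟩

lemma find_colz (m1 m2 : ℕ) (hm2 : 0 < m2) (t : ℕ)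
    (h : ∃ t' : ℕ, colz m1 m2 t = colz m1 m2 t') : Nat.find h = t :=
  (colz_inj m1 m2 hm2 (Nat.find_spec h)).symm

/-- Row-0 seeds built from knob values. -/
noncomputable def σb (m1 m2 : ℕ) (κ : ℕ → k) : ℤ → k := fun c =>
  if c = 0 then 1
  else if h : ∃ t : ℕ, c = colz m1 m2 t then
    (if knobRow m2 c = 0 then κ (Nat.find h) else 0)
  else 0

/-- Values at free (post-singular) spots built from knob values. -/
noncomputable def τb (m1 m2 : ℕ) (κ : ℕ → k) : ℤ → k := fun c =>
  if h : ∃ t : ℕ, c = colz m1 m2 t then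
    (if knobRow m2 c = 0 then 0 else κ (Nat.find h))
  else 0

lemma σb_congr (m1 m2 : ℕ) (κ κ' : ℕ → k) (c : ℤ)
    (h : ∀ t : ℕ, c = colz m1 m2 t → κ t = κ' t) : σb m1 m2 κ c = σb m1 m2 κ' c := by
  unfold σb
  by_cases h0 : c = 0
  · rw [if_pos h0, if_pos h0]
  · rw [if_neg h0, if_neg h0]
    by_cases hex : ∃ t : ℕ, c = colz m1 m2 t
    · rw [dif_pos hex, dif_pos hex]
      by_cases hk : knobRow m2 c = 0
      · rw [if_pos hk, if_pos hk, h _ (Nat.find_spec hex)]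
      · rw [if_neg hk, if_neg hk]
    · rw [dif_neg hex, dif_neg hex]

lemma τb_congr (m1 m2 : ℕ) (κ κ' : ℕ → k) (c : ℤ)
    (h : ∀ t : ℕ, c = colz m1 m2 t → κ t = κ' t) : τb m1 m2 κ c = τb m1 m2 κ' c := by
  unfold τb
  by_cases hex : ∃ t : ℕ, c = colz m1 m2 t
  · rw [dif_pos hex, dif_pos hex]
    by_cases hk : knobRow m2 c = 0
    · rw [if_pos hk, if_pos hk]
    · rw [if_neg hk, if_neg hk, h _ (Nat.find_spec hex)]
  · rw [dif_neg hex, dif_neg hex]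

lemma σb_colz (m1 m2 : ℕ) (hm2 : 0 < m2) (hnd : ¬ m2 ∣ m1) (κ : ℕ → k) (t : ℕ) :
    σb m1 m2 κ (colz m1 m2 t)
      = if knobRow m2 (colz m1 m2 t) = 0 then κ t else 0 := by
  unfold σb
  rw [if_neg (colz_ne_zero m1 m2 hnd t), dif_pos ⟨t, rfl⟩,
    find_colz m1 m2 hm2 t ⟨t, rfl⟩]

lemma τb_colz (m1 m2 : ℕ) (hm2 : 0 < m2) (κ : ℕ → k) (t : ℕ) :
    τb m1 m2 κ (colz m1 m2 t)
      = if knobRow m2 (colz m1 m2 t) = 0 then 0 else κ t := by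
  unfold τb
  rw [dif_pos ⟨t, rfl⟩, find_colz m1 m2 hm2 t ⟨t, rfl⟩]

/-- The greedy correction at step `t`. -/
noncomputable def knobStep (m1 m2 : ℕ) (κ : ℕ → k) (t : ℕ) : k :=
  -((-1)^(t - knobRow m2 (colz m1 m2 t)) *
    wf m1 m2 (σb m1 m2 κ) (τb m1 m2 κ) (colz m1 m2 t) t)

noncomputable def knobsUpTo (m1 m2 : ℕ) : ℕ → (ℕ → k)
  | 0 => fun _ => 0
  | (T+1) => fun t => if t = T then knobStep m1 m2 (knobsUpTo m1 m2 T) T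
      else knobsUpTo m1 m2 T t

noncomputable def knobs (m1 m2 : ℕ) (t : ℕ) : k := knobsUpTo m1 m2 (t+1) t

lemma knobsUpTo_eq (m1 m2 : ℕ) : ∀ (T t : ℕ),
    (knobsUpTo m1 m2 T t : k) = if t < T then knobs m1 m2 t else 0 := by
  intro T
  induction T with
  | zero => intro t; simp [knobsUpTo]
  | succ T ih =>
    intro t
    by_cases ht : t = T
    · subst ht
      rw [if_pos (Nat.lt_succ_self t)]
      rfl
    · have : (knobsUpTo m1 m2 (T+1) t : k) = knobsUpTo m1 m2 T t := by
        show (if t = T then knobStep m1 m2 (knobsUpTo m1 m2 T) T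
          else knobsUpTo m1 m2 T t) = knobsUpTo m1 m2 T t
        rw [if_neg ht]
      rw [this, ih t]
      by_cases h2 : t < T
      · rw [if_pos h2, if_pos (by omega)]
      · rw [if_neg h2, if_neg (by omega)]

/-- knob values truncated to indices `≤ t`. -/
noncomputable def κle (m1 m2 t : ℕ) : ℕ → k := fun t' => if t' ≤ t then knobs m1 m2 t' else 0

/-- knob values truncated to indices `< t`. -/
noncomputable def κlt (m1 m2 t : ℕ) : ℕ → k := fun t' => if t' < t then knobs m1 m2 t' else 0

theorem W_constraint (m1 m2 : ℕ) (hm2 : 0 < m2) (hnd : ¬ m2 ∣ m1) (t : ℕ) :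
    wf m1 m2 (σb m1 m2 (knobs m1 m2)) (τb m1 m2 (knobs m1 m2)) (colz m1 m2 t) t = (0:k) := by
  have hκ₀' : (knobsUpTo m1 m2 t : ℕ → k) = κlt m1 m2 t := by
    funext t'; rw [knobsUpTo_eq]; rfl
  have hknob : (knobs m1 m2 t : k) = knobStep m1 m2 (κlt m1 m2 t) t := by
    show (if t = t then knobStep m1 m2 (knobsUpTo m1 m2 t) t else knobsUpTo m1 m2 t t) = _
    rw [if_pos rfl, hκ₀']
  have agree_le : ∀ t'' : ℕ, t'' ≤ t → (knobs m1 m2 t'' : k) = κle m1 m2 t t'' := by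
    intro t'' h; unfold κle; rw [if_pos h]
  have col_le : ∀ (b : ℕ) (t'' : ℕ),
      colz m1 m2 t + (b:ℤ) * Kz m1 m2 = colz m1 m2 t'' → t'' ≤ t := by
    intro b t'' he
    have hKnn : (0:ℤ) ≤ (b:ℤ) * Kz m1 m2 := by
      have := Kz_pos m1 m2; positivity
    have h1 : (t'':ℤ) * m2 ≤ (t:ℤ) * m2 := by
      unfold colz at he; linarith
    have h2 : (t'':ℤ) ≤ t := le_of_mul_le_mul_right h1 (by exact_mod_cast hm2)
    exact_mod_cast h2
  have step1 : (wf m1 m2 (σb m1 m2 (knobs m1 m2)) (τb m1 m2 (knobs m1 m2)) (colz m1 m2 t) t : k)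
      = wf m1 m2 (σb m1 m2 (κle m1 m2 t)) (τb m1 m2 (κle m1 m2 t)) (colz m1 m2 t) t := by
    apply wf_congr
    intro b
    constructor
    · exact σb_congr m1 m2 _ _ _ (fun t'' he => agree_le t'' (col_le b t'' he))
    · exact τb_congr m1 m2 _ _ _ (fun t'' he => agree_le t'' (col_le b t'' he))
  have κ_agree_ne : ∀ t'' : ℕ, t'' ≠ t → (κle m1 m2 t t'' : k) = κlt m1 m2 t t'' := by
    intro t'' h
    unfold κle κlt
    by_cases h2 : t'' < t
    · rw [if_pos (by omega), if_pos h2]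
    · rw [if_neg (by omega), if_neg h2]
  have κle_t : (κle m1 m2 t t : k) = knobs m1 m2 t := by unfold κle; rw [if_pos le_rfl]
  have κlt_t : (κlt m1 m2 t t : k) = 0 := by unfold κlt; rw [if_neg (by omega)]
  by_cases hr : knobRow m2 (colz m1 m2 t) = 0
  · -- knob is the row-0 seed
    have hsing : ∀ i : ℕ, (colz m1 m2 t + (i:ℤ)*m2 + 1 : ℤ) ≠ 0 := knobRow_zero hr
    have hA : (σb m1 m2 (κle m1 m2 t) : ℤ → k)
        = Function.update (σb m1 m2 (κlt m1 m2 t)) (colz m1 m2 t) (knobs m1 m2 t) := by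
      funext c
      by_cases hc : c = colz m1 m2 t
      · subst hc
        rw [Function.update_self, σb_colz m1 m2 hm2 hnd, if_pos hr, κle_t]
      · rw [Function.update_of_ne hc]
        apply σb_congr
        intro t'' he
        exact κ_agree_ne t'' (by rintro rfl; exact hc he)
    have hB : (τb m1 m2 (κle m1 m2 t) : ℤ → k) = τb m1 m2 (κlt m1 m2 t) := by
      funext c
      by_cases hc : c = colz m1 m2 t
      · subst hc
        rw [τb_colz m1 m2 hm2, τb_colz m1 m2 hm2, if_pos hr, if_pos hr]
      · apply τb_congr
        intro t'' he
        exact κ_agree_ne t'' (by rintro rfl; exact hc he)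
    have hσ0 : (σb m1 m2 (κlt m1 m2 t) (colz m1 m2 t) : k) = 0 := by
      rw [σb_colz m1 m2 hm2 hnd, if_pos hr, κlt_t]
    have hupd := wf_updateA m1 m2 (σb m1 m2 (κlt m1 m2 t) : ℤ → k) (τb m1 m2 (κlt m1 m2 t))
      (colz m1 m2 t) (knobs m1 m2 t) hsing t
    rw [step1, hA, hB, hupd, hσ0, hknob]
    unfold knobStep
    rw [hr, Nat.sub_zero]
    have hpow : ((-1:k)^t) * ((-1:k)^t) = 1 := by
      rw [← pow_add]; exact Even.neg_one_pow ⟨t, rfl⟩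
    set W₀ : k := wf m1 m2 (σb m1 m2 (κlt m1 m2 t)) (τb m1 m2 (κlt m1 m2 t)) (colz m1 m2 t) t
    linear_combination (-W₀) * hpow
  · -- knob is the free value above the singular row
    have hex : ∃ i : ℕ, (colz m1 m2 t + (i:ℤ)*m2 + 1 : ℤ) = 0 := by
      by_contra h
      unfold knobRow at hr
      rw [dif_neg h] at hr
      exact hr rfl
    have hsing : (colz m1 m2 t + ((Nat.find hex : ℕ):ℤ)*m2 + 1 : ℤ) = 0 := Nat.find_spec hex
    set is := Nat.find hex with his
    have hr_eq : knobRow m2 (colz m1 m2 t) = is + 1 := by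
      unfold knobRow; rw [dif_pos hex]
    have hlt : is < t := by
      have h2 : ((t:ℤ) - is) * m2 = m1 + 1 := by
        unfold colz at hsing; linear_combination -hsing
      have h3 : (0:ℤ) < ((t:ℤ) - is) * m2 := by rw [h2]; positivity
      have h4 : (0:ℤ) < (t:ℤ) - is := by
        rcases lt_trichotomy ((t:ℤ) - is) 0 with h | h | h
        · exfalso; nlinarith [show (0:ℤ) ≤ (m2:ℤ) by positivity]
        · exfalso; rw [h, zero_mul] at h3; exact lt_irrefl _ h3
        · exact h
      have : (is:ℤ) < t := by omega
      exact_mod_cast this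
    have hA : (σb m1 m2 (κle m1 m2 t) : ℤ → k) = σb m1 m2 (κlt m1 m2 t) := by
      funext c
      by_cases hc : c = colz m1 m2 t
      · subst hc
        rw [σb_colz m1 m2 hm2 hnd, σb_colz m1 m2 hm2 hnd, if_neg hr, if_neg hr]
      · apply σb_congr
        intro t'' he
        exact κ_agree_ne t'' (by rintro rfl; exact hc he)
    have hB : (τb m1 m2 (κle m1 m2 t) : ℤ → k)
        = Function.update (τb m1 m2 (κlt m1 m2 t)) (colz m1 m2 t) (knobs m1 m2 t) := by
      funext c
      by_cases hc : c = colz m1 m2 t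
      · subst hc
        rw [Function.update_self, τb_colz m1 m2 hm2, if_neg hr, κle_t]
      · rw [Function.update_of_ne hc]
        apply τb_congr
        intro t'' he
        exact κ_agree_ne t'' (by rintro rfl; exact hc he)
    have hτ0 : (τb m1 m2 (κlt m1 m2 t) (colz m1 m2 t) : k) = 0 := by
      rw [τb_colz m1 m2 hm2, if_neg hr, κlt_t]
    have hupd := wf_updateB_high m1 m2 hm2 (σb m1 m2 (κlt m1 m2 t) : ℤ → k) (τb m1 m2 (κlt m1 m2 t))
      (colz m1 m2 t) (knobs m1 m2 t) is hsing (t - (is+1))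
    rw [show is + 1 + (t - (is+1)) = t by omega] at hupd
    rw [step1, hA, hB, hupd, hτ0, hknob]
    unfold knobStep
    rw [hr_eq]
    have hpow : ((-1:k)^(t - (is+1))) * ((-1:k)^(t - (is+1))) = 1 := by
      rw [← pow_add]; exact Even.neg_one_pow ⟨t - (is+1), rfl⟩
    set W₀ : k := wf m1 m2 (σb m1 m2 (κlt m1 m2 t)) (τb m1 m2 (κlt m1 m2 t)) (colz m1 m2 t) t
    linear_combination (-W₀) * hpow

/-- The final array of weights. -/
noncomputable def Wfun (m1 m2 : ℕ) (n : ℤ) (i : ℕ) : k :=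
  wf m1 m2 (σb m1 m2 (knobs m1 m2)) (τb m1 m2 (knobs m1 m2)) n i

theorem Wfun_one (m1 m2 : ℕ) : (Wfun m1 m2 0 0 : k) = 1 := by
  show (σb m1 m2 (knobs m1 m2) 0 : k) = 1
  unfold σb
  rw [if_pos rfl]

theorem Wfun_main (m1 m2 : ℕ) (hm2 : 0 < m2) (hnd : ¬ m2 ∣ m1) (n : ℤ) (i : ℕ) :
    ((n + (i:ℤ) * m2 + 1 : ℤ) : k) * (Wfun m1 m2 n (i+1) + Wfun m1 m2 n i)
      + (i : k) * Wfun m1 m2 (n + Kz m1 m2) (i-1) = 0 := by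
  by_cases hs : (n + (i:ℤ) * m2 + 1 : ℤ) = 0
  · rw [hs, Int.cast_zero, zero_mul, zero_add]
    cases i with
    | zero => rw [Nat.cast_zero, zero_mul]
    | succ j =>
      have hcol : n + Kz m1 m2 = colz m1 m2 j := by
        unfold Kz colz
        push_cast at hs ⊢
        linarith
      rw [hcol]
      unfold Wfun
      rw [show j+1-1 = j from rfl, W_constraint (k := k) m1 m2 hm2 hnd j, mul_zero]
  · unfold Wfun
    rw [wf_succ, if_neg hs]
    have hz : ((n + (i:ℤ) * m2 + 1 : ℤ) : k) ≠ 0 := by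
      exact_mod_cast hs
    have hc : ((n + (i:ℤ)*m2+1 : ℤ) : k) * ((i:k) / ((n + (i:ℤ)*m2+1 : ℤ) : k)) = (i:k) := by
      push_cast
      rw [mul_comm]
      exact div_mul_cancel₀ _ (by push_cast at hz; exact hz)
    linear_combination
      (- wf m1 m2 (σb m1 m2 (knobs m1 m2)) (τb m1 m2 (knobs m1 m2)) (n + Kz m1 m2) (i-1)) * hc

/-! ## The linear functional on `k[x,y]` -/

/-- The linear functional `ε` on `k[x,y]` killing the image of the derivation. -/
noncomputable def epsF (m1 m2 : ℕ) : MvPolynomial (Fin 2) k →ₗ[k] k :=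
  Finsupp.lsum k (fun v : Fin 2 →₀ ℕ =>
    LinearMap.toSpanSingleton k k (Wfun m1 m2 ((v 1 : ℤ) - (v 0 : ℤ) * m2) (v 0)))
    ∘ₗ (AddMonoidAlgebra.coeffLinearEquiv k).toLinearMap

lemma epsF_monomial (m1 m2 : ℕ) (v : Fin 2 →₀ ℕ) (c : k) :
    epsF m1 m2 (monomial v c) = c * Wfun m1 m2 ((v 1 : ℤ) - (v 0 : ℤ) * m2) (v 0) := by
  rw [← single_eq_monomial]
  erw [LinearMap.comp_apply, show (AddMonoidAlgebra.coeffLinearEquiv k).toLinearMap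
    (AddMonoidAlgebra.single v c : MvPolynomial (Fin 2) k) = Finsupp.single v c from rfl]
  erw [Finsupp.lsum_single, LinearMap.toSpanSingleton_apply]
  rw [smul_eq_mul]

lemma XX_eq_monomial (p q : ℕ) :
    (X 0 ^ p * X 1 ^ q : MvPolynomial (Fin 2) k)
      = monomial (Finsupp.single 0 p + Finsupp.single 1 q) 1 := by
  rw [X_pow_eq_monomial, X_pow_eq_monomial, monomial_mul, one_mul]

lemma epsF_XX (m1 m2 : ℕ) (p q : ℕ) :
    epsF m1 m2 (X 0 ^ p * X 1 ^ q : MvPolynomial (Fin 2) k)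
      = Wfun m1 m2 ((q : ℤ) - (p : ℤ) * m2) p := by
  rw [XX_eq_monomial, epsF_monomial, one_mul]
  have h0 : (Finsupp.single (0 : Fin 2) p + Finsupp.single 1 q : Fin 2 →₀ ℕ) 0 = p := by
    simp [Finsupp.single_apply]
  have h1 : (Finsupp.single (0 : Fin 2) p + Finsupp.single 1 q : Fin 2 →₀ ℕ) 1 = q := by
    simp [Finsupp.single_apply]
  rw [h0, h1]

section Deriv

variable (m1 m2 : ℕ) (d : Derivation k (MvPolynomial (Fin 2) k) (MvPolynomial (Fin 2) k))
  (hdx : d (X 0) = X 1 ^ m1) (hdy : d (X 1) = 1 + X 1 ^ m2 * X 0)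

include hdx hdy

lemma d_XX (a b : ℕ) :
    d ((X 0 : MvPolynomial (Fin 2) k) ^ a * X 1 ^ b)
      = a • ((X 0 : MvPolynomial (Fin 2) k) ^ (a-1) * X 1 ^ (b+m1))
      + b • ((X 0 : MvPolynomial (Fin 2) k) ^ a * X 1 ^ (b-1))
      + b • ((X 0 : MvPolynomial (Fin 2) k) ^ (a+1) * X 1 ^ (b-1+m2)) := by
  rw [Derivation.leibniz, Derivation.leibniz_pow, Derivation.leibniz_pow, hdx, hdy]
  simp only [smul_eq_mul, nsmul_eq_mul]
  cases b with
  | zero =>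
    cases a with
    | zero => simp
    | succ a' =>
      simp only [Nat.cast_zero, zero_mul, mul_zero, add_zero, zero_add,
        pow_zero, one_mul, Nat.zero_add, Nat.add_sub_cancel]
      try ring
  | succ b' =>
    cases a with
    | zero =>
      simp only [Nat.cast_zero, zero_mul, mul_zero, add_zero, zero_add, pow_zero, one_mul,
        Nat.add_sub_cancel]
      ring
    | succ a' =>
      simp only [Nat.add_sub_cancel]
      ring

lemma epsF_d_XX (hm2 : 0 < m2) (hnd : ¬ m2 ∣ m1) (a b : ℕ) :
    epsF m1 m2 (d ((X 0 : MvPolynomial (Fin 2) k) ^ a * X 1 ^ b)) = 0 := by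
  rw [d_XX m1 m2 d hdx hdy a b, map_add, map_add, map_nsmul, map_nsmul, map_nsmul,
    epsF_XX, epsF_XX, epsF_XX]
  simp only [nsmul_eq_mul]
  cases b with
  | zero =>
    simp only [Nat.cast_zero, zero_mul, add_zero, Nat.zero_add]
    cases a with
    | zero => simp
    | succ a' =>
      have e1 : ((m1 : ℤ)) - ((a'+1-1 : ℕ) : ℤ) * m2 = colz m1 m2 a' := by
        unfold colz; push_cast [Nat.add_sub_cancel]; ring
      rw [e1, show a'+1-1 = a' from rfl]
      unfold Wfun
      rw [W_constraint (k := k) m1 m2 hm2 hnd a', mul_zero]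
  | succ b' =>
    have key := Wfun_main (k := k) m1 m2 hm2 hnd ((b' : ℤ) - (a : ℤ) * m2) a
    have ecast : ((((b' : ℤ) - (a : ℤ) * m2) + (a:ℤ) * m2 + 1 : ℤ) : k) = ((b'+1 : ℕ) : k) := by
      push_cast; ring
    rw [ecast] at key
    have e2 : ((b'+1-1 : ℕ) : ℤ) - (a : ℤ) * m2 = (b' : ℤ) - (a : ℤ) * m2 := by
      rw [show b'+1-1 = b' from rfl]
    have e3 : ((b'+1-1+m2 : ℕ) : ℤ) - ((a+1 : ℕ) : ℤ) * m2 = (b' : ℤ) - (a : ℤ) * m2 := by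
      rw [show b'+1-1 = b' from rfl]; push_cast; ring
    rw [e2, e3]
    cases a with
    | zero =>
      simp only [Nat.cast_zero, zero_mul, zero_add]
      simp only [Nat.cast_zero, zero_mul, zero_add] at key
      linear_combination key
    | succ a' =>
      have e1 : (((b'+1+m1 : ℕ) : ℤ)) - ((a'+1-1 : ℕ) : ℤ) * m2
          = ((b' : ℤ) - ((a'+1 : ℕ) : ℤ) * m2) + Kz m1 m2 := by
        rw [show a'+1-1 = a' from rfl]; unfold Kz; push_cast; ring
      rw [e1]
      rw [show a'+1-1 = a' from rfl] at key ⊢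
      linear_combination key

lemma epsF_d (hm2 : 0 < m2) (hnd : ¬ m2 ∣ m1) (p : MvPolynomial (Fin 2) k) :
    epsF m1 m2 (d p) = 0 := by
  induction p using MvPolynomial.induction_on' with
  | monomial v c =>
    have hv : v = Finsupp.single 0 (v 0) + Finsupp.single 1 (v 1) := by
      ext i
      fin_cases i <;> simp [Finsupp.single_apply]
    have hmono : monomial v c = c • ((X 0 : MvPolynomial (Fin 2) k) ^ (v 0) * X 1 ^ (v 1)) := by
      rw [XX_eq_monomial, smul_monomial, smul_eq_mul, mul_one, ← hv]
    rw [hmono, Derivation.map_smul, map_smul, epsF_d_XX m1 m2 d hdx hdy hm2 hnd, smul_zero]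
  | add p q hp hq => rw [map_add, map_add, hp, hq, add_zero]

end Deriv

lemma epsF_C (m1 m2 : ℕ) (c : k) : epsF m1 m2 (C c : MvPolynomial (Fin 2) k) = c := by
  rw [show (C c : MvPolynomial (Fin 2) k) = monomial 0 c from rfl, epsF_monomial]
  simp only [Finsupp.coe_zero, Pi.zero_apply, Nat.cast_zero, zero_mul, sub_zero]
  rw [Wfun_one, mul_one]

lemma finSuccEquiv_C_eq (n : ℕ) (c : MvPolynomial (Fin n) k) :
    ∀ a : k, finSuccEquiv k n (C a) = Polynomial.C (C a) := by
  intro a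
  simp [finSuccEquiv_apply]

lemma isUnit_exists_C {p : MvPolynomial (Fin 2) k} (hp : IsUnit p) : ∃ c : k, p = C c := by
  obtain ⟨r, hr, hCr⟩ := Polynomial.isUnit_iff.mp (hp.map (finSuccEquiv k 1))
  obtain ⟨s, hs, hCs⟩ := Polynomial.isUnit_iff.mp (hr.map (finSuccEquiv k 0))
  refine ⟨constantCoeff s, ?_⟩
  have hsC : s = C (constantCoeff s) := by
    have := eq_C_of_isEmpty s
    simpa [constantCoeff_eq] using this
  have hr' : r = C (constantCoeff s) := by
    apply (finSuccEquiv k 0).injective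
    rw [← hCs, hsC]
    simp [finSuccEquiv_apply]
  apply (finSuccEquiv k 1).injective
  rw [← hCr, hr']
  simp [finSuccEquiv_apply]

end Stmt17

open Stmt17 in
/-- For `d(x) = y^{m1}`, `d(y) = 1 + y^{m2} x` with `m2 ∤ m1`, the image of
`d` contains no nonzero element of `k`; in particular it contains no unit of `k[x,y]`,
i.e. `d` is non-invertible. -/
theorem stmt17 (k : Type*) [Field k] [CharZero k]
    (m1 m2 : ℕ) (hm1 : 0 < m1) (hm2 : 0 < m2) (hdvd : ¬ m2 ∣ m1)
    (d : Derivation k (MvPolynomial (Fin 2) k) (MvPolynomial (Fin 2) k))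
    (hdx : d (X 0) = X 1 ^ m1)
    (hdy : d (X 1) = 1 + X 1 ^ m2 * X 0) :
    (∀ (f : MvPolynomial (Fin 2) k) (c : k), d f = C c → c = 0) ∧
      ∀ f : MvPolynomial (Fin 2) k, ¬ IsUnit (d f) := by
  have part1 : ∀ (f : MvPolynomial (Fin 2) k) (c : k), d f = C c → c = 0 := by
    intro f c h
    have h1 := epsF_d m1 m2 d hdx hdy hm2 hdvd f
    rw [h, epsF_C] at h1
    exact h1
  refine ⟨part1, ?_⟩
  intro f hu
  obtain ⟨c, hc⟩ := isUnit_exists_C hu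
  have hc0 : c = 0 := part1 f c hc
  rw [hc0, map_zero] at hc
  rw [hc] at hu
  exact not_isUnit_zero hu
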